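/- Intermediate sets of a 0-extension have no predimension drop: if (X,Z) is a 0-extension of finite sets of vertices of a simple graph G, then δ_r(Y) ≥ δ_r(X) for every Y with X ⊆ Y ⊆ Z; in particular there is no Y with X ⊆ Y ⊆ Z and δ_r(Y) − δ_r(X) < 0. -/

import Mathlib

/-- The number of edges of `G` with both endpoints in the finite set `s`. -/
noncomputable def eCount {V : Type*} (G : SimpleGraph V) (s : Finset V) : ℕ :=
  {e : Sym2 V | e ∈ G.edgeSet ∧ ∀ v ∈ e, v ∈ s}.ncard

/-- The rational predimension `δ_r(s) = |s| - r·e(s)`. -/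
noncomputable def pdimQ {V : Type*} (G : SimpleGraph V) (r : ℚ) (s : Finset V) : ℚ :=
  (s.card : ℚ) - r * (eCount G s : ℚ)

/-- `A ≼ B`: `A ⊆ B` and `δ_r(B₀) > δ_r(A)` for every `B₀` with `A ⊊ B₀ ⊆ B`. -/
def Strong {V : Type*} (G : SimpleGraph V) (r : ℚ) (A B : Finset V) : Prop :=
  A ⊆ B ∧ ∀ B₀ : Finset V, A ⊂ B₀ → B₀ ⊆ B → pdimQ G r A < pdimQ G r B₀

/-- `(X,Z)` is a minimal pair: `X ⊆ Z`, `X ⋠ Z`, but `X ≼ Z₀` for every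
`Z₀` with `X ⊆ Z₀ ⊊ Z`. -/
def MinPair {V : Type*} (G : SimpleGraph V) (r : ℚ) (X Z : Finset V) : Prop :=
  X ⊆ Z ∧ ¬ Strong G r X Z ∧ ∀ Z₀ : Finset V, X ⊆ Z₀ → Z₀ ⊂ Z → Strong G r X Z₀

/-- `(X,Z)` is a `0`-extension: there is a chain `X = X₀ ⊆ … ⊆ X_k = Z` in
which each `(X_i, X_{i+1})` is a minimal pair with `δ_r(X_{i+1}) = δ_r(X_i)`. -/
def ZeroExt {V : Type*} (G : SimpleGraph V) (r : ℚ) (X Z : Finset V) : Prop :=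
  ∃ (k : ℕ) (f : ℕ → Finset V), f 0 = X ∧ f k = Z ∧
    ∀ i < k, MinPair G r (f i) (f (i + 1)) ∧ pdimQ G r (f (i + 1)) = pdimQ G r (f i)

lemma eSet_finite {V : Type*} [DecidableEq V] (G : SimpleGraph V) (s : Finset V) :
    {e : Sym2 V | e ∈ G.edgeSet ∧ ∀ v ∈ e, v ∈ s}.Finite := by
  classical
  apply Set.Finite.subset (Finset.finite_toSet ((s ×ˢ s).image (fun p : V × V => Sym2.mk p.1 p.2)))
  rintro e ⟨-, hmem⟩
  induction e with
  | _ a b =>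
    simp only [Finset.coe_image, Set.mem_image, Finset.mem_coe, Finset.mem_product]
    exact ⟨(a, b), ⟨hmem a (Sym2.mem_mk_left a b), hmem b (Sym2.mem_mk_right a b)⟩, rfl⟩

lemma eCount_supermodular {V : Type*} [DecidableEq V] (G : SimpleGraph V) (A B : Finset V) :
    eCount G A + eCount G B ≤ eCount G (A ∪ B) + eCount G (A ∩ B) := by
  classical
  set SA := {e : Sym2 V | e ∈ G.edgeSet ∧ ∀ v ∈ e, v ∈ A}
  set SB := {e : Sym2 V | e ∈ G.edgeSet ∧ ∀ v ∈ e, v ∈ B}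
  have hA : SA.Finite := eSet_finite G A
  have hB : SB.Finite := eSet_finite G B
  have key : (SA ∪ SB).ncard + (SA ∩ SB).ncard = SA.ncard + SB.ncard :=
    Set.ncard_union_add_ncard_inter SA SB hA hB
  have h1 : (SA ∪ SB).ncard ≤ eCount G (A ∪ B) := by
    apply Set.ncard_le_ncard _ (eSet_finite G (A ∪ B))
    rintro e (⟨he, hv⟩ | ⟨he, hv⟩) <;>
      exact ⟨he, fun v hve => Finset.mem_union.2 (by first | exact Or.inl (hv v hve) | exact Or.inr (hv v hve))⟩
  have h2 : (SA ∩ SB).ncard ≤ eCount G (A ∩ B) := by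
    apply Set.ncard_le_ncard _ (eSet_finite G (A ∩ B))
    rintro e ⟨⟨he, hvA⟩, ⟨-, hvB⟩⟩
    exact ⟨he, fun v hve => Finset.mem_inter.2 ⟨hvA v hve, hvB v hve⟩⟩
  calc eCount G A + eCount G B = SA.ncard + SB.ncard := rfl
    _ = (SA ∪ SB).ncard + (SA ∩ SB).ncard := key.symm
    _ ≤ eCount G (A ∪ B) + eCount G (A ∩ B) := Nat.add_le_add h1 h2

lemma pdimQ_submodular {V : Type*} [DecidableEq V] (G : SimpleGraph V) (r : ℚ) (hr0 : 0 < r)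
    (A B : Finset V) :
    pdimQ G r (A ∪ B) + pdimQ G r (A ∩ B) ≤ pdimQ G r A + pdimQ G r B := by
  classical
  have hcard : (A ∪ B).card + (A ∩ B).card = A.card + B.card :=
    Finset.card_union_add_card_inter A B
  have he := eCount_supermodular G A B
  have he' : (eCount G A : ℚ) + eCount G B ≤ (eCount G (A ∪ B) : ℚ) + eCount G (A ∩ B) := by
    exact_mod_cast he
  have hcard' : ((A ∪ B).card : ℚ) + (A ∩ B).card = (A.card : ℚ) + B.card := by
    exact_mod_cast hcard
  unfold pdimQ
  nlinarith [he', hcard', hr0.le]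

/-- Intermediate sets of a `0`-extension have no predimension drop. -/
theorem zeroExt_no_drop {V : Type*} (G : SimpleGraph V) (r : ℚ)
    (hr0 : 0 < r) (hr1 : r < 1) (X Z : Finset V) (h : ZeroExt G r X Z) :
    (∀ Y : Finset V, X ⊆ Y → Y ⊆ Z → pdimQ G r X ≤ pdimQ G r Y) ∧
      ¬ ∃ Y : Finset V, X ⊆ Y ∧ Y ⊆ Z ∧ pdimQ G r Y - pdimQ G r X < 0 := by
  classical
  obtain ⟨k, f, hf0, hfk, hchain⟩ := h
  have main : ∀ i ≤ k, X ⊆ f i ∧ pdimQ G r (f i) = pdimQ G r X ∧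
      ∀ Y : Finset V, X ⊆ Y → Y ⊆ f i → pdimQ G r X ≤ pdimQ G r Y := by
    intro i hi
    induction i with
    | zero =>
      refine ⟨Finset.subset_of_eq hf0.symm, by rw [hf0], ?_⟩
      intro Y hXY hYX
      rw [hf0] at hYX
      rw [Finset.Subset.antisymm hXY hYX]
    | succ i ih =>
      obtain ⟨hXfi, hpd, hIH⟩ := ih (Nat.le_of_succ_le hi)
      obtain ⟨⟨hsub, _, hmin⟩, heq⟩ := hchain i (Nat.lt_of_succ_le hi)
      have hX1 : X ⊆ f (i + 1) := hXfi.trans hsub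
      have hstep : ∀ Y : Finset V, X ⊆ Y → Y ⊆ f (i + 1) → pdimQ G r X ≤ pdimQ G r Y := by
        intro Y hXY hY1
        have hAle : pdimQ G r X ≤ pdimQ G r (Y ∩ f i) := by
          apply hIH
          · exact Finset.subset_inter hXY hXfi
          · exact Finset.inter_subset_right
        have hBsub : f i ⊆ Y ∪ f i := Finset.subset_union_right
        have hB1 : Y ∪ f i ⊆ f (i + 1) := Finset.union_subset hY1 hsub
        have hBle : pdimQ G r (f i) ≤ pdimQ G r (Y ∪ f i) := by
          rcases eq_or_lt_of_le (α := Finset V) hB1 with hEQ | hSS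
          · rw [hEQ, heq]
          · rcases eq_or_lt_of_le (α := Finset V) hBsub with hEQ2 | hSS2
            · rw [← hEQ2]
            · exact le_of_lt ((hmin (Y ∪ f i) hBsub hSS).2 (Y ∪ f i) hSS2 subset_rfl)
        have hsm := pdimQ_submodular G r hr0 Y (f i)
        linarith
      exact ⟨hX1, le_antisymm (by rw [heq, hpd]) (hstep (f (i+1)) hX1 subset_rfl), hstep⟩
  obtain ⟨-, -, hmain⟩ := main k le_rfl
  rw [hfk] at hmain
  refine ⟨hmain, ?_⟩
  rintro ⟨Y, hXY, hYZ, hlt⟩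
  have := hmain Y hXY hYZ
  linarith
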